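/- Let B be a strongly E-Birkhoff Galois structure on a Barr exact category C. If t : A → B and s : B → C are regular epimorphisms such that the composite s ∘ t : A → C is a trivial covering, then both t and s are trivial coverings. -/

import Mathlib

open CategoryTheory CategoryTheory.Limits

universe v u

namespace Paper

variable {C : Type u} [Category.{v} C]

/-- `f` is a regular epimorphism. -/
def IsRegEpi {X Y : C} (f : X ⟶ Y) : Prop := Nonempty (RegularEpi f)

/-- A regular category: a finitely complete category with coequalizers of kernel pairs in
which regular epimorphisms are stable under pullback. -/
class RegularCat (C : Type u) [Category.{v} C] [HasFiniteLimits C] : Prop where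
  hasCoeqOfKernelPairs : ∀ {X Y : C} (f : X ⟶ Y),
    HasCoequalizer (pullback.fst f f) (pullback.snd f f)
  regEpiPullbackStable : ∀ {X Y Z : C} (f : X ⟶ Y) (g : Z ⟶ Y),
    IsRegEpi f → IsRegEpi (pullback.snd f g)

/-- An internal equivalence relation given by a parallel pair `r₁ r₂ : R ⟶ X`. -/
structure IsEquivRel [HasFiniteLimits C] {R X : C} (r₁ r₂ : R ⟶ X) : Prop where
  jointlyMono : Mono (prod.lift r₁ r₂)
  refl : ∃ d : X ⟶ R, d ≫ r₁ = 𝟙 X ∧ d ≫ r₂ = 𝟙 X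
  symm : ∃ s : R ⟶ R, s ≫ r₁ = r₂ ∧ s ≫ r₂ = r₁
  trans : ∃ t : pullback r₂ r₁ ⟶ R,
    t ≫ r₁ = pullback.fst r₂ r₁ ≫ r₁ ∧ t ≫ r₂ = pullback.snd r₂ r₁ ≫ r₂

/-- A Barr exact category: a regular category in which every internal equivalence relation
is effective (i.e. is a kernel pair). -/
class BarrExact (C : Type u) [Category.{v} C] [HasFiniteLimits C] extends RegularCat C : Prop where
  equivRelEffective : ∀ {R X : C} (r₁ r₂ : R ⟶ X), IsEquivRel r₁ r₂ →
    ∃ (Y : C) (f : X ⟶ Y), IsKernelPair f r₁ r₂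

section DoubleExt
variable [HasFiniteLimits C]

/-- A double extension: a commutative square `αt ≫ fB = fA ≫ αb` of regular epimorphisms
whose comparison morphism to the pullback is also a regular epimorphism. -/
structure IsDoubleExt {A₁ A₀ B₁ B₀ : C} (fA : A₁ ⟶ A₀) (fB : B₁ ⟶ B₀)
    (αt : A₁ ⟶ B₁) (αb : A₀ ⟶ B₀) : Prop where
  w : αt ≫ fB = fA ≫ αb
  left : IsRegEpi fA
  right : IsRegEpi fB
  top : IsRegEpi αt
  bot : IsRegEpi αb
  comparison : IsRegEpi (pullback.lift fA αt w.symm : A₁ ⟶ pullback αb fB)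

end DoubleExt

/-- The category `Ext C` of extensions: the full subcategory of the arrow category of `C`
determined by the regular epimorphisms. -/
abbrev ExtCat (C : Type u) [Category.{v} C] : Type max u v :=
  ObjectProperty.FullSubcategory (fun f : Arrow C => IsRegEpi f.hom)

/-- An object of `Ext C` from a regular epimorphism. -/
def ExtCat.mk' {X Y : C} (f : X ⟶ Y) (hf : IsRegEpi f) : ExtCat C :=
  ⟨Arrow.mk f, hf⟩

/-- The top (domain) component of a morphism of `Ext C`. -/
def ExtCat.homLeft {f g : ExtCat C} (φ : f ⟶ g) : f.obj.left ⟶ g.obj.left :=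
  CommaMorphism.left φ.hom

/-- The bottom (codomain) component of a morphism of `Ext C`. -/
def ExtCat.homRight {f g : ExtCat C} (φ : f ⟶ g) : f.obj.right ⟶ g.obj.right :=
  CommaMorphism.right φ.hom

lemma ExtCat.homLeft_comp {f g h : ExtCat C} (a : f ⟶ g) (b : g ⟶ h) :
    ExtCat.homLeft (a ≫ b) = ExtCat.homLeft a ≫ ExtCat.homLeft b := rfl

lemma ExtCat.homRight_comp {f g h : ExtCat C} (a : f ⟶ g) (b : g ⟶ h) :
    ExtCat.homRight (a ≫ b) = ExtCat.homRight a ≫ ExtCat.homRight b := rfl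

lemma ExtCat.hom_w {f g : ExtCat C} (φ : f ⟶ g) :
    ExtCat.homLeft φ ≫ g.obj.hom = f.obj.hom ≫ ExtCat.homRight φ :=
  CommaMorphism.w φ.hom

/-- A morphism of `Ext C` from a commutative square in `C`. -/
def ExtCat.homMk' {X₁ X₀ Y₁ Y₀ : C} {f : X₁ ⟶ X₀} {g : Y₁ ⟶ Y₀}
    {hf : IsRegEpi f} {hg : IsRegEpi g}
    (u : X₁ ⟶ Y₁) (v : X₀ ⟶ Y₀) (w : u ≫ g = f ≫ v) :
    ExtCat.mk' f hf ⟶ ExtCat.mk' g hg :=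
  ObjectProperty.homMk (Arrow.homMk (u := u) (v := v) w)

/-- A (commutative) square in `C`, with left vertical `left : A₁ ⟶ A₀`, right vertical
`right : B₁ ⟶ B₀`, top horizontal `top : A₁ ⟶ B₁` and bottom horizontal `bot : A₀ ⟶ B₀`. -/
structure Sq (C : Type u) [Category.{v} C] where
  A₁ : C
  A₀ : C
  B₁ : C
  B₀ : C
  left : A₁ ⟶ A₀
  right : B₁ ⟶ B₀
  top : A₁ ⟶ B₁
  bot : A₀ ⟶ B₀
  w : top ≫ right = left ≫ bot

/-- The square is a double extension. -/
def Sq.IsDE [HasFiniteLimits C] (s : Sq C) : Prop :=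
  IsDoubleExt s.left s.right s.top s.bot

/-- A commutative cube, presented as a morphism of squares `Φ : s ⟶ t`. -/
structure SqHom (s t : Sq C) where
  h₁₁ : s.A₁ ⟶ t.A₁
  h₁₀ : s.A₀ ⟶ t.A₀
  h₀₁ : s.B₁ ⟶ t.B₁
  h₀₀ : s.B₀ ⟶ t.B₀
  wA : h₁₁ ≫ t.left = s.left ≫ h₁₀
  wB : h₀₁ ≫ t.right = s.right ≫ h₀₀
  wt : h₁₁ ≫ t.top = s.top ≫ h₀₁
  wb : h₁₀ ≫ t.bot = s.bot ≫ h₀₀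

/-- Composition of cubes (as morphisms of squares). -/
def SqHom.comp {s t u : Sq C} (Φ : SqHom s t) (Ψ : SqHom t u) : SqHom s u where
  h₁₁ := Φ.h₁₁ ≫ Ψ.h₁₁
  h₁₀ := Φ.h₁₀ ≫ Ψ.h₁₀
  h₀₁ := Φ.h₀₁ ≫ Ψ.h₀₁
  h₀₀ := Φ.h₀₀ ≫ Ψ.h₀₀
  wA := by rw [Category.assoc, Ψ.wA, ← Category.assoc, Φ.wA, Category.assoc]
  wB := by rw [Category.assoc, Ψ.wB, ← Category.assoc, Φ.wB, Category.assoc]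
  wt := by rw [Category.assoc, Ψ.wt, ← Category.assoc, Φ.wt, Category.assoc]
  wb := by rw [Category.assoc, Ψ.wb, ← Category.assoc, Φ.wb, Category.assoc]

section Cube
variable [HasFiniteLimits C]

/-- Seen as a morphism `(σ, β) : s ⟶ t` between the double extensions `s` (as the arrow
`s.left → s.right`) and `t`, the face `σ` of the cube: the square from `s.left` to `t.left`. -/
def SqHom.sigmaSq {s t : Sq C} (Φ : SqHom s t) : Sq C where
  A₁ := s.A₁
  A₀ := s.A₀
  B₁ := t.A₁
  B₀ := t.A₀
  left := s.left
  right := t.left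
  top := Φ.h₁₁
  bot := Φ.h₁₀
  w := Φ.wA

/-- The face `β` of the cube: the square from `s.right` to `t.right`. -/
def SqHom.betaSq {s t : Sq C} (Φ : SqHom s t) : Sq C where
  A₁ := s.B₁
  A₀ := s.B₀
  B₁ := t.B₁
  B₀ := t.B₀
  left := s.right
  right := t.right
  top := Φ.h₀₁
  bot := Φ.h₀₀
  w := Φ.wB

/-- Top component of the componentwise pullback of `t` (i.e. `α`) and `betaSq Φ` (i.e. `β`). -/
noncomputable def SqHom.P₁ {s t : Sq C} (Φ : SqHom s t) : C := pullback t.top Φ.h₀₁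

/-- Bottom component of the componentwise pullback of `α` and `β`. -/
noncomputable def SqHom.P₀ {s t : Sq C} (Φ : SqHom s t) : C := pullback t.bot Φ.h₀₀

/-- The induced arrow between the components of the componentwise pullback of `α` and `β`. -/
noncomputable def SqHom.fP {s t : Sq C} (Φ : SqHom s t) : Φ.P₁ ⟶ Φ.P₀ :=
  pullback.map t.top Φ.h₀₁ t.bot Φ.h₀₀ t.left s.right t.right t.w Φ.wB

/-- The top comparison morphism. -/
noncomputable def SqHom.c₁ {s t : Sq C} (Φ : SqHom s t) : s.A₁ ⟶ Φ.P₁ :=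
  pullback.lift Φ.h₁₁ s.top Φ.wt

/-- The bottom comparison morphism. -/
noncomputable def SqHom.c₀ {s t : Sq C} (Φ : SqHom s t) : s.A₀ ⟶ Φ.P₀ :=
  pullback.lift Φ.h₁₀ s.bot Φ.wb

lemma SqHom.comp_w {s t : Sq C} (Φ : SqHom s t) : Φ.c₁ ≫ Φ.fP = s.left ≫ Φ.c₀ := by
  apply pullback.hom_ext
  · unfold SqHom.c₁ SqHom.c₀ SqHom.fP SqHom.P₁ SqHom.P₀
    rw [pullback.map, Category.assoc, pullback.lift_fst, Category.assoc, pullback.lift_fst,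
      ← Category.assoc, pullback.lift_fst, Φ.wA]
  · unfold SqHom.c₁ SqHom.c₀ SqHom.fP SqHom.P₁ SqHom.P₀
    rw [pullback.map, Category.assoc, pullback.lift_snd, Category.assoc, pullback.lift_snd,
      ← Category.assoc, pullback.lift_snd, s.w]

/-- The comparison square of the cube `Φ`, from `s.left` to the componentwise pullback
of `α` and `β`. -/
noncomputable def SqHom.compSq {s t : Sq C} (Φ : SqHom s t) : Sq C where
  A₁ := s.A₁
  A₀ := s.A₀
  B₁ := Φ.P₁
  B₀ := Φ.P₀
  left := s.left
  right := Φ.fP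
  top := Φ.c₁
  bot := Φ.c₀
  w := Φ.comp_w

/-- A `3`-cubical extension: the two opposite faces `γ = s` and `α = t`, the two connecting
faces `σ` and `β`, and the comparison square to the componentwise pullback of `α` and `β`
are all double extensions. -/
def SqHom.Is3CubExt {s t : Sq C} (Φ : SqHom s t) : Prop :=
  s.IsDE ∧ t.IsDE ∧ Φ.sigmaSq.IsDE ∧ Φ.betaSq.IsDE ∧ Φ.compSq.IsDE

end Cube

/-- The cube `Φ : s ⟶ t` is a limit cube: the cone from the initial vertex `s.A₁` on the
diagram formed by the remaining seven vertices is a limit cone. -/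
def SqHom.IsLimitCube {s t : Sq C} (Φ : SqHom s t) : Prop :=
  ∀ (W : C) (wA₀ : W ⟶ s.A₀) (wB₁ : W ⟶ s.B₁) (wtA₁ : W ⟶ t.A₁),
    wA₀ ≫ s.bot = wB₁ ≫ s.right →
    wA₀ ≫ Φ.h₁₀ = wtA₁ ≫ t.left →
    wB₁ ≫ Φ.h₀₁ = wtA₁ ≫ t.top →
    ∃! u : W ⟶ s.A₁, u ≫ s.left = wA₀ ∧ u ≫ s.top = wB₁ ∧ u ≫ Φ.h₁₁ = wtA₁

/-- A discrete fibration (of order 3): a `3`-cubical extension which is a limit cube. -/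
def SqHom.IsDiscFib [HasFiniteLimits C] {s t : Sq C} (Φ : SqHom s t) : Prop :=
  Φ.Is3CubExt ∧ Φ.IsLimitCube
section Galois
variable [HasFiniteLimits C]

/-- A strongly E-Birkhoff Galois structure on `C`: a full replete reflective subcategory
(given by the predicate `inB`, the reflector `F` and the unit `η`) such that every unit
component is a regular epimorphism and every naturality square of the unit at a regular
epimorphism is a double extension. -/
structure BirkhoffStructure (C : Type u) [Category.{v} C] [HasFiniteLimits C] where
  inB : C → Prop
  replete : ∀ {X Y : C}, inB X → (X ≅ Y) → inB Y
  F : C ⥤ C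
  η : 𝟭 C ⟶ F
  obj_inB : ∀ A : C, inB (F.obj A)
  unit_regEpi : ∀ A : C, IsRegEpi (η.app A)
  univ : ∀ {A X : C}, inB X → ∀ g : A ⟶ X, ∃! h : F.obj A ⟶ X, η.app A ≫ h = g
  stronglyBirkhoff : ∀ {A B : C} (f : A ⟶ B), IsRegEpi f →
    IsDoubleExt f (F.map f) (η.app A) (η.app B)

/-- A trivial covering: a regular epimorphism whose unit naturality square is a pullback. -/
def TrivialCovering (G : BirkhoffStructure C) {T E : C} (t : T ⟶ E) : Prop :=
  IsRegEpi t ∧ IsPullback (G.η.app T) t (G.F.map t) (G.η.app E)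

/-- A covering: a regular epimorphism whose pullback along some regular epimorphism is a
trivial covering. -/
def Covering (G : BirkhoffStructure C) {A B : C} (c : A ⟶ B) : Prop :=
  IsRegEpi c ∧ ∃ (E : C) (e : E ⟶ B), IsRegEpi e ∧ TrivialCovering G (pullback.snd c e)

end Galois

/-- The underlying square in `C` of a morphism of `Ext C`. -/
def sqOfHom {f g : ExtCat C} (φ : f ⟶ g) : Sq C where
  A₁ := f.obj.left
  A₀ := f.obj.right
  B₁ := g.obj.left
  B₀ := g.obj.right
  left := f.obj.hom
  right := g.obj.hom
  top := ExtCat.homLeft φ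
  bot := ExtCat.homRight φ
  w := ExtCat.hom_w φ

/-- The underlying cube in `C` of a naturality square in `Ext C` of a natural
transformation `η₁ : 𝟭 (Ext C) ⟶ F₁` at a morphism `φ : f ⟶ g` of `Ext C`. -/
def natCube (F₁ : ExtCat C ⥤ ExtCat C) (η₁ : 𝟭 (ExtCat C) ⟶ F₁) {f g : ExtCat C}
    (φ : f ⟶ g) : SqHom (sqOfHom φ) (sqOfHom (F₁.map φ)) where
  h₁₁ := ExtCat.homLeft (η₁.app f)
  h₁₀ := ExtCat.homRight (η₁.app f)
  h₀₁ := ExtCat.homLeft (η₁.app g)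
  h₀₀ := ExtCat.homRight (η₁.app g)
  wA := ExtCat.hom_w (η₁.app f)
  wB := ExtCat.hom_w (η₁.app g)
  wt := by
    have h := congrArg ExtCat.homLeft (η₁.naturality φ)
    rw [ExtCat.homLeft_comp, ExtCat.homLeft_comp] at h
    exact h.symm
  wb := by
    have h := congrArg ExtCat.homRight (η₁.naturality φ)
    rw [ExtCat.homRight_comp, ExtCat.homRight_comp] at h
    exact h.symm

section LevelOne
variable [HasFiniteLimits C]

/-- The level-one Galois structure induced by a strongly E-Birkhoff Galois structure `G`:
the coverings form a reflective subcategory of `Ext C`, with reflector `F₁` and unit `η₁`,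
every unit component is a double extension, and the reflection is strongly E₂-Birkhoff. -/
structure LevelOne (G : BirkhoffStructure C) where
  F₁ : ExtCat C ⥤ ExtCat C
  η₁ : 𝟭 (ExtCat C) ⟶ F₁
  obj_cov : ∀ f : ExtCat C, Covering G (F₁.obj f).obj.hom
  univ : ∀ {f x : ExtCat C}, Covering G x.obj.hom → ∀ g : f ⟶ x,
    ∃! h : F₁.obj f ⟶ x, η₁.app f ≫ h = g
  unit_DE : ∀ f : ExtCat C, (sqOfHom (η₁.app f)).IsDE
  stronglyBirkhoff : ∀ {f g : ExtCat C} (φ : f ⟶ g), (sqOfHom φ).IsDE →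
    (natCube F₁ η₁ φ).Is3CubExt

/-- A trivial double covering: a morphism of `Ext C` whose underlying square is a double
extension and whose `η₁`-naturality square is a pullback in `Ext C`. -/
def TrivDoubleCov {G : BirkhoffStructure C} (L : LevelOne G) {f g : ExtCat C}
    (φ : f ⟶ g) : Prop :=
  (sqOfHom φ).IsDE ∧ IsPullback (L.η₁.app f) φ (L.F₁.map φ) (L.η₁.app g)

/-- A double covering: a double extension `α : d ⟶ c` in `Ext C` such that the pullback of
`α` along some double extension `γ : e ⟶ c` is a trivial double covering. -/
def DoubleCov {G : BirkhoffStructure C} (L : LevelOne G) {d c : ExtCat C}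
    (α : d ⟶ c) : Prop :=
  (sqOfHom α).IsDE ∧ ∃ (e : ExtCat C) (γ : e ⟶ c), (sqOfHom γ).IsDE ∧
    ∃ (p : ExtCat C) (pγ : p ⟶ e) (pα : p ⟶ d),
      IsPullback pγ pα γ α ∧ TrivDoubleCov L pγ

end LevelOne

section Statement11Aux

variable {C : Type u} [Category.{v} C]

/-- A regular epimorphism composed with an isomorphism is a regular epimorphism. -/
lemma isRegEpi_comp_isIso {X Y Z : C} {f : X ⟶ Y} (hf : IsRegEpi f) (e : Y ⟶ Z) [IsIso e] :
    IsRegEpi (f ≫ e) := by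
  obtain ⟨hf⟩ := hf
  haveI : RegularEpi f := hf
  haveI : Epi f := RegularEpi.epi f hf
  refine ⟨{ W := hf.W, left := hf.left, right := hf.right
            w := by rw [← Category.assoc, ← Category.assoc, hf.w]
            isColimit := ?_ }⟩
  refine Cofork.IsColimit.mk _ (fun s => inv e ≫ hf.isColimit.desc s)
    (fun s => ?_) (fun s m hm => ?_)
  · have h := Cofork.IsColimit.π_desc (t := s) hf.isColimit
    simp only [Cofork.π_ofπ] at h ⊢
    rw [Category.assoc, IsIso.hom_inv_id_assoc, h]
  · have h := Cofork.IsColimit.π_desc (t := s) hf.isColimit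
    simp only [Cofork.π_ofπ] at h hm
    have h2 : f ≫ e ≫ m = f ≫ hf.isColimit.desc s := by
      rw [← Category.assoc, hm, h]
    have h3 := (cancel_epi f).mp h2
    rw [← h3, IsIso.inv_hom_id_assoc]

/-- An isomorphism composed with a regular epimorphism is a regular epimorphism. -/
lemma isRegEpi_isIso_comp {X' X Y : C} {f : X ⟶ Y} (hf : IsRegEpi f) (e : X' ⟶ X) [IsIso e] :
    IsRegEpi (e ≫ f) := by
  obtain ⟨hf⟩ := hf
  haveI : RegularEpi f := hf
  haveI : Epi f := RegularEpi.epi f hf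
  refine ⟨{ W := hf.W, left := hf.left ≫ inv e, right := hf.right ≫ inv e
            w := by
              simp only [Category.assoc, IsIso.inv_hom_id_assoc]
              exact hf.w
            isColimit := ?_ }⟩
  refine Cofork.IsColimit.mk _
    (fun s => hf.isColimit.desc (Cofork.ofπ (inv e ≫ s.π) (by
      have hc := s.condition
      simp only [Category.assoc] at hc ⊢
      exact hc)))
    (fun s => ?_) (fun s m hm => ?_)
  · have h := Cofork.IsColimit.π_desc
      (t := Cofork.ofπ (inv e ≫ s.π) (by
        have hc := s.condition
        simp only [Category.assoc] at hc ⊢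
        exact hc)) hf.isColimit
    simp only [Cofork.π_ofπ] at h ⊢
    rw [Category.assoc, h, IsIso.hom_inv_id_assoc]
  · have h := Cofork.IsColimit.π_desc
      (t := Cofork.ofπ (inv e ≫ s.π) (by
        have hc := s.condition
        simp only [Category.assoc] at hc ⊢
        exact hc)) hf.isColimit
    simp only [Cofork.π_ofπ] at h hm
    apply (cancel_epi f).mp
    rw [h, ← hm, Category.assoc, IsIso.inv_hom_id_assoc]

/-- Core of statement 11, stated with abstract data: if the outer naturality-type square
is a pullback, the two comparison morphisms are regular epimorphisms, the right-hand
vertical `Ft` is a regular epimorphism, and regular epis are pullback-stable, then both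
inner squares are pullbacks. -/
lemma statement_11_aux [HasFiniteLimits C]
    {A B X FA FB FX : C}
    (t : A ⟶ B) (s : B ⟶ X) (Ft : FA ⟶ FB) (Fs : FB ⟶ FX)
    (ηA : A ⟶ FA) (ηB : B ⟶ FB) (ηX : X ⟶ FX)
    (natT : ηA ≫ Ft = t ≫ ηB) (natS : ηB ≫ Fs = s ≫ ηX)
    (hFt : IsRegEpi Ft)
    (hct : IsRegEpi (pullback.lift ηA t natT : A ⟶ pullback Ft ηB))
    (hcs : IsRegEpi (pullback.lift ηB s natS : B ⟶ pullback Fs ηX))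
    (hbig : IsPullback ηA (t ≫ s) (Ft ≫ Fs) ηX)
    (stable : ∀ (X' Y' Z' : C) (f : X' ⟶ Y') (g : Z' ⟶ Y'),
      IsRegEpi f → IsRegEpi (pullback.snd f g)) :
    IsPullback ηA t Ft ηB ∧ IsPullback ηB s Fs ηX := by
  have dq₁ : (pullback.lift ηB s natS) ≫ pullback.fst Fs ηX = ηB := pullback.lift_fst _ _ _
  have dq₂ : (pullback.lift ηB s natS) ≫ pullback.snd Fs ηX = s := pullback.lift_snd _ _ _
  -- the square from `A` to the pullback of `Fs` and `ηX` is a pullback,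
  -- by cancellation of the pasted pullbacks
  have hQ : IsPullback ηA (t ≫ pullback.lift ηB s natS) Ft (pullback.fst Fs ηX) :=
    IsPullback.of_bot
      (show IsPullback ηA ((t ≫ pullback.lift ηB s natS) ≫ pullback.snd Fs ηX)
          (Ft ≫ Fs) ηX by rw [Category.assoc, dq₂]; exact hbig)
      (by rw [natT, Category.assoc, dq₁])
      (IsPullback.of_hasPullback Fs ηX)
  -- Part 1: the `t`-square is a pullback
  have m_w : pullback.fst Ft ηB ≫ Ft
      = (pullback.snd Ft ηB ≫ pullback.lift ηB s natS) ≫ pullback.fst Fs ηX := by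
    rw [Category.assoc, dq₁, pullback.condition]
  have hcm : pullback.lift ηA t natT ≫
      hQ.lift (pullback.fst Ft ηB) (pullback.snd Ft ηB ≫ pullback.lift ηB s natS) m_w
      = 𝟙 A := by
    apply hQ.hom_ext
    · rw [Category.assoc, hQ.lift_fst, pullback.lift_fst, Category.id_comp]
    · rw [Category.assoc, hQ.lift_snd, ← Category.assoc, pullback.lift_snd, Category.id_comp]
  haveI : RegularEpi (pullback.lift ηA t natT : A ⟶ pullback Ft ηB) := hct.some
  haveI : IsSplitMono (pullback.lift ηA t natT : A ⟶ pullback Ft ηB) :=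
    IsSplitMono.mk' ⟨_, hcm⟩
  haveI : IsIso (pullback.lift ηA t natT : A ⟶ pullback Ft ηB) :=
    isIso_of_regularEpi_of_mono _ hct.some
  have hT : IsPullback ηA t Ft ηB :=
    IsPullback.of_iso_pullback ⟨natT⟩ (asIso (pullback.lift ηA t natT))
      (pullback.lift_fst _ _ _) (pullback.lift_snd _ _ _)
  -- Part 2: the `s`-square is a pullback
  have htd : IsRegEpi (t ≫ pullback.lift ηB s natS) := by
    have h2 := hQ.isoPullback_hom_snd
    rw [← h2]
    exact isRegEpi_isIso_comp (stable _ _ _ Ft (pullback.fst Fs ηX) hFt) _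
  have key : ∀ {W : C} (a : W ⟶ A) (b : W ⟶ B),
      a ≫ (t ≫ pullback.lift ηB s natS) = b ≫ pullback.lift ηB s natS → a ≫ t = b := by
    intro W a b hab
    have h1 : (a ≫ ηA) ≫ Ft = b ≫ ηB := by
      have h0 : (a ≫ (t ≫ pullback.lift ηB s natS)) ≫ pullback.fst Fs ηX
          = (b ≫ pullback.lift ηB s natS) ≫ pullback.fst Fs ηX := by rw [hab]
      simp only [Category.assoc, dq₁] at h0
      simp only [Category.assoc, natT]
      exact h0
    have hu : hT.lift (a ≫ ηA) b h1 = a := by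
      apply hQ.hom_ext
      · rw [hT.lift_fst]
      · rw [← Category.assoc, hT.lift_snd]
        exact hab.symm
    have h3 := hT.lift_snd (a ≫ ηA) b h1
    rw [hu] at h3
    exact h3
  have hmono : Mono (pullback.lift ηB s natS : B ⟶ pullback Fs ηX) := by
    refine ⟨fun {W} k₁ k₂ hk => ?_⟩
    have hsnd := stable _ _ _ (t ≫ pullback.lift ηB s natS) (k₁ ≫ pullback.lift ηB s natS) htd
    haveI : RegularEpi (pullback.snd (t ≫ pullback.lift ηB s natS)
        (k₁ ≫ pullback.lift ηB s natS)) := hsnd.some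
    haveI : Epi (pullback.snd (t ≫ pullback.lift ηB s natS)
        (k₁ ≫ pullback.lift ηB s natS)) := RegularEpi.epi _ hsnd.some
    have hcond := pullback.condition (f := t ≫ pullback.lift ηB s natS)
      (g := k₁ ≫ pullback.lift ηB s natS)
    have e₁ := key
      (pullback.fst (t ≫ pullback.lift ηB s natS) (k₁ ≫ pullback.lift ηB s natS))
      (pullback.snd (t ≫ pullback.lift ηB s natS) (k₁ ≫ pullback.lift ηB s natS) ≫ k₁)
      (by rw [Category.assoc]; exact hcond)
    have e₂ := key
      (pullback.fst (t ≫ pullback.lift ηB s natS) (k₁ ≫ pullback.lift ηB s natS))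
      (pullback.snd (t ≫ pullback.lift ηB s natS) (k₁ ≫ pullback.lift ηB s natS) ≫ k₂)
      (by rw [Category.assoc, ← hk]; exact hcond)
    exact (cancel_epi (pullback.snd (t ≫ pullback.lift ηB s natS)
      (k₁ ≫ pullback.lift ηB s natS))).mp (e₁.symm.trans e₂)
  haveI : Mono (pullback.lift ηB s natS : B ⟶ pullback Fs ηX) := hmono
  haveI : RegularEpi (pullback.lift ηB s natS : B ⟶ pullback Fs ηX) := hcs.some
  haveI : IsIso (pullback.lift ηB s natS : B ⟶ pullback Fs ηX) :=
    isIso_of_regularEpi_of_mono _ hcs.some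
  exact ⟨hT, IsPullback.of_iso_pullback ⟨natS⟩ (asIso (pullback.lift ηB s natS))
    (pullback.lift_fst _ _ _) (pullback.lift_snd _ _ _)⟩

end Statement11Aux

/-- if a composite of regular epimorphisms is a trivial covering, then so are
both factors. -/
theorem statement_11 {C : Type u} [Category.{v} C] [HasFiniteLimits C] [BarrExact C]
    (G : BirkhoffStructure C)
    {A B X : C} (t : A ⟶ B) (s : B ⟶ X)
    (ht : IsRegEpi t) (hs : IsRegEpi s)
    (h : TrivialCovering G (t ≫ s)) :
    TrivialCovering G t ∧ TrivialCovering G s := by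
  obtain ⟨hts, hbig⟩ := h
  have natT : G.η.app A ≫ G.F.map t = t ≫ G.η.app B := by
    simpa using (G.η.naturality t).symm
  have natS : G.η.app B ≫ G.F.map s = s ≫ G.η.app X := by
    simpa using (G.η.naturality s).symm
  have DEt := G.stronglyBirkhoff t ht
  have DEs := G.stronglyBirkhoff s hs
  have hct : IsRegEpi (pullback.lift (G.η.app A) t natT :
      A ⟶ pullback (G.F.map t) (G.η.app B)) := by
    have hcomp := DEt.comparison
    have heq : pullback.lift t (G.η.app A) DEt.w.symm ≫
        (pullbackSymmetry (G.η.app B) (G.F.map t)).hom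
        = pullback.lift (G.η.app A) t natT := by
      apply pullback.hom_ext
      · rw [Category.assoc, pullbackSymmetry_hom_comp_fst, pullback.lift_snd,
          pullback.lift_fst]
      · rw [Category.assoc, pullbackSymmetry_hom_comp_snd, pullback.lift_fst,
          pullback.lift_snd]
    rw [← heq]
    exact isRegEpi_comp_isIso hcomp _
  have hcs : IsRegEpi (pullback.lift (G.η.app B) s natS :
      B ⟶ pullback (G.F.map s) (G.η.app X)) := by
    have hcomp := DEs.comparison
    have heq : pullback.lift s (G.η.app B) DEs.w.symm ≫
        (pullbackSymmetry (G.η.app X) (G.F.map s)).hom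
        = pullback.lift (G.η.app B) s natS := by
      apply pullback.hom_ext
      · rw [Category.assoc, pullbackSymmetry_hom_comp_fst, pullback.lift_snd,
          pullback.lift_fst]
      · rw [Category.assoc, pullbackSymmetry_hom_comp_snd, pullback.lift_fst,
          pullback.lift_snd]
    rw [← heq]
    exact isRegEpi_comp_isIso hcomp _
  have hbig' : IsPullback (G.η.app A) (t ≫ s) (G.F.map t ≫ G.F.map s) (G.η.app X) := by
    rw [← G.F.map_comp]; exact hbig
  obtain ⟨hT, hS⟩ := statement_11_aux t s (G.F.map t) (G.F.map s)
    (G.η.app A) (G.η.app B) (G.η.app X) natT natS DEt.right hct hcs hbig'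
    (fun _ _ _ f g hf => RegularCat.regEpiPullbackStable f g hf)
  exact ⟨⟨ht, hT⟩, ⟨hs, hS⟩⟩

end Paper
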